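/- Let t ≥ 0, let the vertex set be 𝔽₂^t × [m], and colour each edge between (v₁,x₁) and (v₂,x₂) (both distinct from a distinguished vertex) with v₁ + v₂ ∈ 𝔽₂^t. Then for any path P with endpoints (v₁, x) and (v₂, y) where v₁ ≠ v₂, the sum over the edges of P of their colours equals v₁ + v₂ ≠ 0; in particular the number of edges of P of some colour c ∈ 𝔽₂^t is odd. -/
import Mathlib


open SimpleGraph

lemma add_self_zero {t : ℕ} (a : Fin t → ZMod 2) : a + a = 0 := by
  funext i
  have : ∀ x : ZMod 2, x + x = 0 := by decide
  exact this (a i)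

lemma telescope_sum {m t : ℕ} :
    ∀ {a b : (Fin t → ZMod 2) × Fin m}
      (p : (⊤ : SimpleGraph ((Fin t → ZMod 2) × Fin m)).Walk a b),
      (p.darts.map (fun d => d.fst.1 + d.snd.1)).sum = a.1 + b.1 := by
  intro a b p
  induction p with
  | nil => simp [add_self_zero]
  | @cons u v w h q ih =>
      simp only [Walk.darts_cons, List.map_cons, List.sum_cons, ih]
      rw [add_assoc, ← add_assoc v.1, add_self_zero, zero_add]

/-- On the vertex set `𝔽₂^t × [m]`, colour each edge between `(v₁, x₁)` and `(v₂, x₂)` (both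
distinct from the distinguished vertex `(0, m)`) with `v₁ + v₂ ∈ 𝔽₂^t`. Then for any path `P`
avoiding the distinguished vertex with endpoints `(v₁, x)` and `(v₂, y)` where `v₁ ≠ v₂`, the
sum of the colours over the edges of `P` equals `v₁ + v₂ ≠ 0`; in particular the number of
edges of `P` of some colour `c ∈ 𝔽₂^t` is odd. -/
theorem path_colour_sum (m t : ℕ) (hm : 1 ≤ m)
    (v₁ v₂ : Fin t → ZMod 2) (x y : Fin m)
    (p : (⊤ : SimpleGraph ((Fin t → ZMod 2) × Fin m)).Walk (v₁, x) (v₂, y))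
    (hp : p.IsPath)
    (hv₀ : (((0 : Fin t → ZMod 2), (⟨m - 1, by omega⟩ : Fin m)) :
      (Fin t → ZMod 2) × Fin m) ∉ p.support)
    (hne : v₁ ≠ v₂) :
    (p.darts.map (fun d => d.fst.1 + d.snd.1)).sum = v₁ + v₂ ∧
    v₁ + v₂ ≠ 0 ∧
    ∃ c : Fin t → ZMod 2,
      Odd ((p.darts.filter (fun d => d.fst.1 + d.snd.1 = c)).length) := by
  have hsum : (p.darts.map (fun d => d.fst.1 + d.snd.1)).sum = v₁ + v₂ :=
    telescope_sum p
  have hnz : v₁ + v₂ ≠ 0 := by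
    intro h
    apply hne
    funext i
    have := congrFun h i
    simp only [Pi.add_apply, Pi.zero_apply] at this
    revert this
    generalize v₁ i = a; generalize v₂ i = b
    revert a b; decide
  refine ⟨hsum, hnz, ?_⟩
  by_contra hcon
  push_neg at hcon
  apply hnz
  rw [← hsum]
  set l := p.darts.map (fun d => d.fst.1 + d.snd.1) with hl
  rw [Finset.sum_list_count]
  apply Finset.sum_eq_zero
  intro c _
  have h1 := hcon c
  rw [Nat.not_odd_iff_even] at h1
  have h2 : l.count c
      = (List.filter (fun d => d.toProd.1.1 + d.toProd.2.1 = c) p.darts).length := by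
    rw [hl, ← List.countP_eq_length_filter, List.count, List.countP_map]
    congr 1
  rw [h2] at *
  obtain ⟨k, hk⟩ := h1
  rw [hk, add_nsmul, add_self_zero]
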